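/- Let ABCDEF be a hexagon with all angles 120° and opposite sides parallel at distance 1. If |AB| ≤ |BC|, then |AB| + |BC| = 2/√3, and hence |AB| ≤ 1/√3. -/

import Mathlib

open EuclideanGeometry Affine Metric RealInnerProductSpace

private def cr2 (x y : EuclideanSpace ℝ (Fin 2)) : ℝ := x 0 * y 1 - x 1 * y 0

private lemma inner_c (x y : EuclideanSpace ℝ (Fin 2)) : ⟪x, y⟫ = x 0 * y 0 + x 1 * y 1 := by
  simp [PiLp.inner_apply, RCLike.inner_apply, Fin.sum_univ_two, mul_comm]

private lemma normsq_c (x : EuclideanSpace ℝ (Fin 2)) : ‖x‖ ^ 2 = x 0 ^ 2 + x 1 ^ 2 := by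
  rw [← real_inner_self_eq_norm_sq, inner_c]; ring

private lemma lagrange (x y : EuclideanSpace ℝ (Fin 2)) :
    (cr2 x y) ^ 2 = ‖x‖ ^ 2 * ‖y‖ ^ 2 - (⟪x, y⟫) ^ 2 := by
  rw [normsq_c, normsq_c, inner_c]; unfold cr2; ring

private lemma cr2_mul (x y z w : EuclideanSpace ℝ (Fin 2)) :
    cr2 x y * cr2 z w = ⟪x, z⟫ * ⟪y, w⟫ - ⟪x, w⟫ * ⟪y, z⟫ := by
  simp only [cr2, inner_c]; ring

private lemma cr2_add_left (x y z : EuclideanSpace ℝ (Fin 2)) :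
    cr2 (x + y) z = cr2 x z + cr2 y z := by
  simp only [cr2, PiLp.add_apply]; ring

private lemma cr2_smul_left (p : ℝ) (x z : EuclideanSpace ℝ (Fin 2)) :
    cr2 (p • x) z = p * cr2 x z := by
  simp only [cr2, PiLp.smul_apply, smul_eq_mul]; ring

private lemma cr2_self (x : EuclideanSpace ℝ (Fin 2)) : cr2 x x = 0 := by
  simp [cr2, mul_comm]

private lemma ne_of_ang {X Y Z : EuclideanSpace ℝ (Fin 2)}
    (h : ∠ X Y Z = 2 * Real.pi / 3) : X ≠ Y ∧ Z ≠ Y := by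
  constructor
  · rintro rfl
    rw [EuclideanGeometry.angle, vsub_self, InnerProductGeometry.angle_zero_left] at h
    have := Real.pi_pos; linarith
  · rintro rfl
    rw [EuclideanGeometry.angle, vsub_self, InnerProductGeometry.angle_zero_right] at h
    have := Real.pi_pos; linarith

private lemma inner_of_ang {X Y Z : EuclideanSpace ℝ (Fin 2)}
    (h : ∠ X Y Z = 2 * Real.pi / 3) :
    ⟪X -ᵥ Y, Z -ᵥ Y⟫ = -(1 / 2) * (‖X -ᵥ Y‖ * ‖Z -ᵥ Y‖) := by
  have hc : Real.cos (2 * Real.pi / 3) = -(1 / 2) := by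
    rw [show 2 * Real.pi / 3 = Real.pi - Real.pi / 3 by ring, Real.cos_pi_sub,
      Real.cos_pi_div_three]
  have := InnerProductGeometry.cos_angle_mul_norm_mul_norm (X -ᵥ Y) (Z -ᵥ Y)
  rw [show InnerProductGeometry.angle (X -ᵥ Y) (Z -ᵥ Y) = ∠ X Y Z from rfl, h, hc] at this
  linarith [this]

private lemma par_scalar {P Q R S : EuclideanSpace ℝ (Fin 2)}
    (h : line[ℝ, P, Q] ∥ line[ℝ, R, S]) (hRS : R ≠ S) :
    ∃ p : ℝ, p ≠ 0 ∧ S -ᵥ R = p • (Q -ᵥ P) := by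
  have hd := h.direction_eq
  rw [direction_affineSpan, direction_affineSpan] at hd
  have hmem : S -ᵥ R ∈ vectorSpan ℝ ({P, Q} : Set (EuclideanSpace ℝ (Fin 2))) := by
    rw [hd]; exact vsub_rev_mem_vectorSpan_pair ℝ R S
  rcases mem_vectorSpan_pair_rev.1 hmem with ⟨p, hp⟩
  refine ⟨p, ?_, hp.symm⟩
  rintro rfl
  rw [zero_smul] at hp
  exact hRS (vsub_eq_zero_iff_eq.1 hp.symm).symm

private lemma infdist_sq (Pt Q R : EuclideanSpace ℝ (Fin 2)) (h : Q ≠ R) :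
    (infDist Pt (line[ℝ, Q, R] : Set (EuclideanSpace ℝ (Fin 2)))) ^ 2 * ‖R -ᵥ Q‖ ^ 2
      = (cr2 (Pt -ᵥ Q) (R -ᵥ Q)) ^ 2 := by
  set x : EuclideanSpace ℝ (Fin 2) := R -ᵥ Q with hxdef
  set y : EuclideanSpace ℝ (Fin 2) := Pt -ᵥ Q with hydef
  have hx : x ≠ 0 := fun hx0 => h (by
    have := vsub_eq_zero_iff_eq.1 hx0; exact this.symm ▸ rfl)
  have hx2 : ‖x‖ ^ 2 ≠ 0 := pow_ne_zero _ (norm_ne_zero_iff.2 hx)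
  set t : ℝ := ⟪y, x⟫ / ‖x‖ ^ 2 with htdef
  have hinner : ⟪y, x⟫ = t * ‖x‖ ^ 2 := by rw [htdef, div_mul_cancel₀ _ hx2]
  have expand : ∀ s : ℝ, ‖y - s • x‖ ^ 2 = ‖y‖ ^ 2 - 2 * (s * ⟪y, x⟫) + s ^ 2 * ‖x‖ ^ 2 := by
    intro s
    rw [norm_sub_sq_real, real_inner_smul_right, norm_smul, mul_pow]
    simp [Real.norm_eq_abs, sq_abs]
  have key : ∀ s : ℝ, ‖y - t • x‖ ^ 2 ≤ ‖y - s • x‖ ^ 2 := by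
    intro s
    rw [expand, expand, hinner]
    nlinarith [mul_nonneg (sq_nonneg (s - t)) (sq_nonneg ‖x‖)]
  have foot_mem : t • x +ᵥ Q ∈ line[ℝ, Q, R] := smul_vsub_vadd_mem_affineSpan_pair t Q R
  have dfoot : dist Pt (t • x +ᵥ Q) = ‖y - t • x‖ := by
    rw [dist_eq_norm_vsub (EuclideanSpace ℝ (Fin 2)), vsub_vadd_eq_vsub_sub]
  have hId : infDist Pt (line[ℝ, Q, R] : Set (EuclideanSpace ℝ (Fin 2))) = ‖y - t • x‖ := by
    refine le_antisymm (dfoot ▸ infDist_le_dist_of_mem foot_mem) ?_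
    by_contra hlt
    push_neg at hlt
    rcases (infDist_lt_iff ⟨_, foot_mem⟩).1 hlt with ⟨z, hz, hdz⟩
    have hz' : (z -ᵥ Q) +ᵥ Q ∈ line[ℝ, Q, R] := by rwa [vsub_vadd]
    rcases vadd_left_mem_affineSpan_pair.1 hz' with ⟨r, hr⟩
    have hzz : z = r • x +ᵥ Q := by rw [hxdef, hr, vsub_vadd]
    have hdistz : dist Pt z = ‖y - r • x‖ := by
      rw [dist_eq_norm_vsub (EuclideanSpace ℝ (Fin 2)), hzz, vsub_vadd_eq_vsub_sub]
    have h1 := key r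
    have h2 : ‖y - t • x‖ ≤ ‖y - r • x‖ := by
      nlinarith [norm_nonneg (y - t • x), norm_nonneg (y - r • x)]
    rw [hdistz] at hdz
    linarith
  rw [hId, expand, lagrange, hinner]
  ring

private lemma key_alg (a b c k s t m : ℝ) (ha : 0 < a) (hb : 0 < b) (hc : 0 < c)
    (hs : s ^ 2 = a ^ 2 * b ^ 2 - (1 / 2 * (a * b)) ^ 2)
    (ht : t ^ 2 = b ^ 2 * c ^ 2 - (1 / 2 * (b * c)) ^ 2)
    (hm : m ^ 2 = a ^ 2 * c ^ 2 - k ^ 2)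
    (hst : s * t = 1 / 2 * (a * b) * (1 / 2 * (b * c)) - k * b ^ 2)
    (htm : t * m = 1 / 2 * (a * b) * c ^ 2 - 1 / 2 * (b * c) * k)
    (hk : k ^ 2 = (1 / 2 * (c * a)) ^ 2)
    (hD3 : (m + t) ^ 2 = c ^ 2) : a + b = 2 / Real.sqrt 3 := by
  have hfac : (k - 1 / 2 * (c * a)) * (k + 1 / 2 * (c * a)) = 0 := by linear_combination hk
  have hk' : k = -(1 / 2 * (c * a)) := by
    rcases mul_eq_zero.1 hfac with h | h
    · exfalso
      have hkk : k = 1 / 2 * (c * a) := by linarith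
      have h1 : (s * t) ^ 2 = s ^ 2 * t ^ 2 := by ring
      rw [hs, ht, hst, hkk] at h1
      nlinarith [mul_pos (mul_pos (pow_pos ha 2) (pow_pos hb 4)) (pow_pos hc 2)]
    · linarith
  subst hk'
  have e : c ^ 2 * (3 * (a + b) ^ 2 - 4) = 0 := by
    linear_combination -4 * hm - 8 * htm - 4 * ht + 4 * hD3
  have h2 : 3 * (a + b) ^ 2 = 4 := by
    have hc2 : c ^ 2 ≠ 0 := by positivity
    rcases mul_eq_zero.1 e with h | h
    · exact absurd h hc2
    · linarith
  have hs3 : (0:ℝ) < Real.sqrt 3 := Real.sqrt_pos.2 (by norm_num)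
  have hsq3 : Real.sqrt 3 ^ 2 = 3 := Real.sq_sqrt (by norm_num)
  have hab : 0 < a + b := by linarith
  have hq : (2 / Real.sqrt 3) ^ 2 = 4 / 3 := by
    rw [div_pow, hsq3]; norm_num
  have hfac2 : (a + b - 2 / Real.sqrt 3) * (a + b + 2 / Real.sqrt 3) = 0 := by
    linear_combination (1 / 3) * h2 - hq
  rcases mul_eq_zero.1 hfac2 with h | h
  · linarith
  · exfalso
    have : 0 < 2 / Real.sqrt 3 := by positivity
    linarith

theorem stmt1
    (A B C D E F : EuclideanSpace ℝ (Fin 2))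
    (hFAB : ∠ F A B = 2 * Real.pi / 3) (hABC : ∠ A B C = 2 * Real.pi / 3)
    (hBCD : ∠ B C D = 2 * Real.pi / 3) (hCDE : ∠ C D E = 2 * Real.pi / 3)
    (hDEF : ∠ D E F = 2 * Real.pi / 3) (hEFA : ∠ E F A = 2 * Real.pi / 3)
    (hpar1 : line[ℝ, A, B] ∥ line[ℝ, D, E])
    (hpar2 : line[ℝ, B, C] ∥ line[ℝ, E, F])
    (hpar3 : line[ℝ, C, D] ∥ line[ℝ, F, A])
    (hdist1 : Metric.infDist A (line[ℝ, D, E] : Set (EuclideanSpace ℝ (Fin 2))) = 1)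
    (hdist2 : Metric.infDist B (line[ℝ, E, F] : Set (EuclideanSpace ℝ (Fin 2))) = 1)
    (hdist3 : Metric.infDist C (line[ℝ, F, A] : Set (EuclideanSpace ℝ (Fin 2))) = 1)
    (hle : dist A B ≤ dist B C) :
    dist A B + dist B C = 2 / Real.sqrt 3 ∧ dist A B ≤ 1 / Real.sqrt 3 := by
  obtain ⟨hAneB, hCneB⟩ := ne_of_ang hABC
  obtain ⟨hBneC, hDneC⟩ := ne_of_ang hBCD
  obtain ⟨hCneD, hEneD⟩ := ne_of_ang hCDE
  obtain ⟨hDneE, hFneE⟩ := ne_of_ang hDEF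
  obtain ⟨hFneA, hBneA⟩ := ne_of_ang hFAB
  set u : EuclideanSpace ℝ (Fin 2) := B -ᵥ A with hu
  set v : EuclideanSpace ℝ (Fin 2) := C -ᵥ B with hv
  set w : EuclideanSpace ℝ (Fin 2) := D -ᵥ C with hw
  set a : ℝ := ‖u‖ with hadef
  set b : ℝ := ‖v‖ with hbdef
  set c : ℝ := ‖w‖ with hcdef
  have ha : 0 < a := norm_pos_iff.2 (vsub_ne_zero.2 hBneA)
  have hb : 0 < b := norm_pos_iff.2 (vsub_ne_zero.2 hCneB)
  have hc : 0 < c := norm_pos_iff.2 (vsub_ne_zero.2 hDneC)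
  -- E1 : ⟪u, v⟫ = 1/2 * (a * b)
  have e1 : ⟪u, v⟫ = 1 / 2 * (a * b) := by
    have h1 := inner_of_ang hABC
    rw [show A -ᵥ B = -u by rw [hu, neg_vsub_eq_vsub_rev],
      show C -ᵥ B = v from rfl, inner_neg_left, norm_neg] at h1
    linarith
  -- E2 : ⟪v, w⟫ = 1/2 * (b * c)
  have e2 : ⟪v, w⟫ = 1 / 2 * (b * c) := by
    have h1 := inner_of_ang hBCD
    rw [show B -ᵥ C = -v by rw [hv, neg_vsub_eq_vsub_rev],
      show D -ᵥ C = w from rfl, inner_neg_left, norm_neg] at h1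
    linarith
  -- parallelism 1 : E -ᵥ D = p • u
  obtain ⟨p, hpne, hp⟩ := par_scalar hpar1 hDneE
  rw [← hu] at hp
  -- parallelism 3 : A -ᵥ F = r • w
  obtain ⟨r, hrne, hr⟩ := par_scalar hpar3 hFneA
  rw [← hw] at hr
  -- E3 : ⟪u, w⟫ ^ 2 = (1/2 * (c * a)) ^ 2
  have e3 : ⟪u, w⟫ ^ 2 = (1 / 2 * (c * a)) ^ 2 := by
    have h1 := inner_of_ang hCDE
    rw [show C -ᵥ D = -w by rw [hw, neg_vsub_eq_vsub_rev], hp, inner_neg_left,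
      real_inner_smul_right, norm_neg, norm_smul, Real.norm_eq_abs] at h1
    -- h1 : -(p * ⟪w, u⟫) = -(1/2) * (c * (|p| * a))
    have h2 : p * ⟪w, u⟫ = 1 / 2 * (c * (|p| * a)) := by linarith
    have h3 : p ^ 2 * ⟪w, u⟫ ^ 2 = p ^ 2 * (1 / 2 * (c * a)) ^ 2 := by
      linear_combination (p * ⟪w, u⟫ + 1 / 2 * (c * (|p| * a))) * h2
        + (c ^ 2 * a ^ 2 / 4) * (sq_abs p)
    have h4 := mul_left_cancel₀ (pow_ne_zero 2 hpne) h3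
    rw [real_inner_comm] at h4
    exact h4
  -- D3 : (cr2 u w + cr2 v w) ^ 2 = c ^ 2
  have d3 : (cr2 u w + cr2 v w) ^ 2 = c ^ 2 := by
    have hd := infdist_sq C F A hFneA
    rw [hdist3, one_pow, one_mul] at hd
    have hCF : C -ᵥ F = (v + u) + r • w := by
      rw [show C -ᵥ F = (C -ᵥ A) + (A -ᵥ F) from (vsub_add_vsub_cancel C A F).symm,
        show C -ᵥ A = v + u from (vsub_add_vsub_cancel C B A).symm, hr]
    rw [hCF, hr] at hd
    have hnorm : ‖r • w‖ ^ 2 = r ^ 2 * c ^ 2 := by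
      rw [norm_smul, Real.norm_eq_abs, mul_pow, sq_abs]
    have hcr : cr2 (v + u + r • w) (r • w) = r * (cr2 v w + cr2 u w) := by
      rw [cr2_add_left, cr2_add_left, cr2_smul_left]
      have h1 : cr2 v (r • w) = r * cr2 v w := by
        simp only [cr2, PiLp.smul_apply, smul_eq_mul]; ring
      have h2 : cr2 u (r • w) = r * cr2 u w := by
        simp only [cr2, PiLp.smul_apply, smul_eq_mul]; ring
      have h3 : cr2 w (r • w) = r * cr2 w w := by
        simp only [cr2, PiLp.smul_apply, smul_eq_mul]; ring
      rw [h1, h2, h3, cr2_self]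
      ring
    rw [hnorm, hcr] at hd
    have hr2 : r ^ 2 ≠ 0 := pow_ne_zero 2 hrne
    have : r ^ 2 * c ^ 2 = r ^ 2 * (cr2 u w + cr2 v w) ^ 2 := by
      rw [hd]; ring
    have := mul_left_cancel₀ hr2 this
    linarith
  -- Lagrange identities
  have hs : (cr2 u v) ^ 2 = a ^ 2 * b ^ 2 - (1 / 2 * (a * b)) ^ 2 := by
    rw [lagrange, e1]
  have ht : (cr2 v w) ^ 2 = b ^ 2 * c ^ 2 - (1 / 2 * (b * c)) ^ 2 := by
    rw [lagrange, e2]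
  have hm : (cr2 u w) ^ 2 = a ^ 2 * c ^ 2 - (⟪u, w⟫) ^ 2 := lagrange u w
  -- product identities
  have hst : cr2 u v * cr2 v w = 1 / 2 * (a * b) * (1 / 2 * (b * c)) - ⟪u, w⟫ * b ^ 2 := by
    rw [cr2_mul, e1, e2, real_inner_self_eq_norm_sq]
  have htm : cr2 v w * cr2 u w = 1 / 2 * (a * b) * c ^ 2 - 1 / 2 * (b * c) * ⟪u, w⟫ := by
    rw [cr2_mul, real_inner_comm u v, e1, real_inner_self_eq_norm_sq,
      real_inner_comm u w, e2]
  have habsum : a + b = 2 / Real.sqrt 3 :=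
    key_alg a b c (⟪u, w⟫) (cr2 u v) (cr2 v w) (cr2 u w) ha hb hc hs ht hm hst htm e3 d3
  have hdAB : dist A B = a := by
    rw [dist_comm, dist_eq_norm_vsub (EuclideanSpace ℝ (Fin 2))]
  have hdBC : dist B C = b := by
    rw [dist_comm, dist_eq_norm_vsub (EuclideanSpace ℝ (Fin 2))]
  rw [hdAB, hdBC] at hle ⊢
  refine ⟨habsum, ?_⟩
  have : 2 / Real.sqrt 3 = 2 * (1 / Real.sqrt 3) := by ring
  linarith [habsum, hle, this ▸ habsum]
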